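/- Let B : [0,T] × ℝ^d → ℝ^d be bounded and let X_1, X_2 be absolutely continuous flows on B_r with ∂_t X_i(t,x) = B(t, X_i(t,x)) and X_i(0,x) = x. Then with Φ_δ(t) = ∫_{B_r} log(1 + |X_1(t,x)-X_2(t,x)|/δ) dx one has Φ_δ(t) ≤ ∫_0^t ∫_{B_r} min{ 2||B||_∞/δ , |B(s,X_1(s,x)) - B(s,X_2(s,x))| / |X_1(s,x)-X_2(s,x)| } dx ds, where the quotient is interpreted as 0 when X_1 = X_2. -/

import Mathlib

open MeasureTheory Metric Filter
open scoped ENNReal Topology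

lemma bdd_integrableOn {E : Type*} [NormedAddCommGroup E] [MeasurableSpace E]
    [BorelSpace E] [SecondCountableTopology E]
    {g : ℝ → E} {C : ℝ} {s : Set ℝ} (hg : Measurable g)
    (hs : MeasurableSet s) (hμ : volume s < ⊤) (hb : ∀ u ∈ s, ‖g u‖ ≤ C) :
    IntegrableOn g s := by
  refine Integrable.mono' (g := fun _ => C) ?_ hg.aestronglyMeasurable ?_
  · exact integrableOn_const hμ.ne
  · filter_upwards [self_mem_ae_restrict hs] with u hu
    simpa using hb u hu

lemma bdd_intervalIntegrable {E : Type*} [NormedAddCommGroup E] [MeasurableSpace E]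
    [BorelSpace E] [SecondCountableTopology E]
    {g : ℝ → E} {C a b : ℝ} (hg : Measurable g)
    (hb : ∀ s ∈ Set.uIcc a b, ‖g s‖ ≤ C) : IntervalIntegrable g volume a b := by
  rw [intervalIntegrable_iff]
  exact bdd_integrableOn hg measurableSet_uIoc measure_Ioc_lt_top
    (fun s hs => hb s (Set.uIoc_subset_uIcc hs))

lemma key (δ M t : ℝ) (hδ : 0 < δ) (hM : 0 ≤ M) (ht : 0 ≤ t)
    (g Z : ℝ → ℝ) (hg : Measurable g) (hg0 : ∀ s, 0 ≤ g s) (hgM : ∀ s, g s ≤ 2 * M)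
    (hZm : Measurable Z) (hZ0 : ∀ s, 0 ≤ Z s) (hgZ : ∀ s, Z s = 0 → g s = 0)
    (hZ : ∀ s ∈ Set.Icc (0:ℝ) t, Z s ≤ ∫ u in (0:ℝ)..s, g u) :
    Real.log (1 + Z t / δ) ≤ ∫ s in Set.Ioc (0:ℝ) t, min (2 * M / δ) (g s / Z s) := by
  set A : ℝ → ℝ := fun s => ∫ u in (0:ℝ)..s, g u with hA
  have habs : ∀ s, |g s| ≤ 2 * M := fun s => by
    rw [abs_of_nonneg (hg0 s)]; exact hgM s
  have hgI : ∀ a b : ℝ, IntervalIntegrable g volume a b := fun a b =>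
    bdd_intervalIntegrable hg (fun s _ => habs s)
  have hAc : Continuous A := intervalIntegral.continuous_primitive hgI 0
  have hAdiff : ∀ a b : ℝ, A b - A a = ∫ u in a..b, g u := by
    intro a b
    have h := intervalIntegral.integral_add_adjacent_intervals (hgI 0 a) (hgI a b)
    simp only [hA]
    linarith
  have hAmono : ∀ a b : ℝ, a ≤ b → A a ≤ A b := by
    intro a b hab
    have h1 := hAdiff a b
    have h2 : (0:ℝ) ≤ ∫ u in a..b, g u :=
      intervalIntegral.integral_nonneg hab (fun u _ => hg0 u)
    linarith
  have hA0 : A 0 = 0 := by simp [hA]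
  have hAnn : ∀ s, 0 ≤ s → 0 ≤ A s := fun s hs => hA0 ▸ hAmono 0 s hs
  have hAub : ∀ a b : ℝ, a ≤ b → A b - A a ≤ 2*M*(b-a) := by
    intro a b hab
    rw [hAdiff a b]
    calc ∫ u in a..b, g u ≤ ∫ u in a..b, 2*M :=
          intervalIntegral.integral_mono_on hab (hgI a b) intervalIntegrable_const
            (fun u _ => hgM u)
      _ = 2*M*(b-a) := by simp; ring
  have hApos : ∀ s, 0 ≤ s → 0 < δ + A s := fun s hs => by linarith [hAnn s hs]
  set F : ℝ → ℝ := fun s => g s / (δ + A s) with hF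
  have hFm : Measurable F := hg.div (measurable_const.add hAc.measurable)
  have hFb : ∀ s, 0 ≤ s → |F s| ≤ 2*M/δ := by
    intro s hs
    have h1 := hApos s hs
    rw [abs_of_nonneg (div_nonneg (hg0 s) h1.le)]
    exact div_le_div₀ (by positivity) (hgM s) hδ (by linarith [hAnn s hs])
  have hFI : ∀ a b : ℝ, 0 ≤ a → 0 ≤ b → IntervalIntegrable F volume a b := by
    intro a b ha hb
    refine bdd_intervalIntegrable hFm (fun s hs => hFb s ?_)
    rw [Set.mem_uIcc] at hs
    rcases hs with ⟨h1, _⟩ | ⟨h1, _⟩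
    · linarith
    · linarith
  -- main discrete claim
  have claim : ∀ n : ℕ, 1 ≤ n →
      Real.log (δ + A t) - Real.log δ ≤
        (∫ s in (0:ℝ)..t, F s) + (t*(2*M*(2*M*t))/(δ*δ))/n := by
    intro n hn
    have hn0 : (0:ℝ) < n := by exact_mod_cast hn
    set h : ℝ := t / n with hh
    have hh0 : 0 ≤ h := div_nonneg ht hn0.le
    set a : ℕ → ℝ := fun i => i * h with ha
    have ha0 : a 0 = 0 := by simp [ha]
    have han : a n = t := by simp only [ha, hh]; field_simp
    have hstepd : ∀ i : ℕ, a (i+1) - a i = h := by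
      intro i; simp only [ha]; push_cast; ring
    have hamono : ∀ i : ℕ, a i ≤ a (i+1) := fun i => by
      have := hstepd i; linarith
    have hann : ∀ i : ℕ, 0 ≤ a i := fun i =>
      mul_nonneg (Nat.cast_nonneg i) hh0
    have htel : ∑ i ∈ Finset.range n,
        (Real.log (δ + A (a (i+1))) - Real.log (δ + A (a i)))
        = Real.log (δ + A t) - Real.log δ := by
      rw [Finset.sum_range_sub (fun i => Real.log (δ + A (a i))), ha0, han, hA0]
      ring_nf
    have hstepbd : ∀ i ∈ Finset.range n,
        Real.log (δ + A (a (i+1))) - Real.log (δ + A (a i)) ≤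
          (∫ s in a i..a (i+1), F s) + h * (2*M*(2*M*h)/(δ*δ)) := by
      intro i _
      set p := a i with hp
      set q := a (i+1) with hq
      have hpq : p ≤ q := hamono i
      have hp0 : 0 ≤ p := hann i
      have hq0 : 0 ≤ q := le_trans hp0 hpq
      have hqp : q - p = h := hstepd i
      have hPp := hApos p hp0
      have hPq := hApos q hq0
      have h1 : Real.log (δ + A q) - Real.log (δ + A p) ≤ (A q - A p)/(δ + A p) := by
        have h2 := Real.log_le_sub_one_of_pos
          (x := (δ + A q)/(δ + A p)) (by positivity)
        rw [Real.log_div hPq.ne' hPp.ne'] at h2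
        have h3 : (δ + A q)/(δ + A p) - 1 = (A q - A p)/(δ + A p) := by
          field_simp
          ring
        linarith
      have h2 : (A q - A p)/(δ + A p) = ∫ s in p..q, g s/(δ + A p) := by
        rw [hAdiff p q, intervalIntegral.integral_div]
      have h3 : (∫ s in p..q, g s/(δ + A p)) ≤
          ∫ s in p..q, (F s + 2*M*(2*M*h)/(δ*δ)) := by
        refine intervalIntegral.integral_mono_on hpq
          (bdd_intervalIntegrable (C := 2*M/δ) (hg.div measurable_const) ?_)
          ((hFI p q hp0 hq0).add intervalIntegrable_const) ?_
        · intro s _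
          have hApnn := hAnn p hp0
          rw [Real.norm_eq_abs, abs_of_nonneg (div_nonneg (hg0 s) hPp.le)]
          exact div_le_div₀ (by positivity) (hgM s) hδ (by linarith)
        · intro s hs
          have hs0 : 0 ≤ s := le_trans hp0 hs.1
          have hAps : A p ≤ A s := hAmono p s hs.1
          have hAsP := hApos s hs0
          have hApnn := hAnn p hp0
          have hAsnn := hAnn s hs0
          have hdiffb : A s - A p ≤ 2*M*h := by
            have := hAub p s hs.1
            nlinarith [hs.2]
          have hkey : g s/(δ + A p) - F s = g s * (A s - A p)/((δ + A p)*(δ + A s)) := by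
            simp only [hF]
            field_simp
            ring
          have hbd : g s * (A s - A p)/((δ + A p)*(δ + A s)) ≤ 2*M*(2*M*h)/(δ*δ) := by
            apply div_le_div₀ (by positivity)
              (mul_le_mul (hgM s) hdiffb (by linarith) (by positivity))
              (by positivity)
              (mul_le_mul (by linarith) (by linarith) hδ.le (by linarith))
          linarith
      have h4 : (∫ s in p..q, (F s + 2*M*(2*M*h)/(δ*δ)))
          = (∫ s in p..q, F s) + h * (2*M*(2*M*h)/(δ*δ)) := by
        rw [intervalIntegral.integral_add (hFI p q hp0 hq0) intervalIntegrable_const,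
          intervalIntegral.integral_const, hqp, smul_eq_mul]
      linarith
    calc Real.log (δ + A t) - Real.log δ
        = ∑ i ∈ Finset.range n,
            (Real.log (δ + A (a (i+1))) - Real.log (δ + A (a i))) := htel.symm
      _ ≤ ∑ i ∈ Finset.range n,
            ((∫ s in a i..a (i+1), F s) + h * (2*M*(2*M*h)/(δ*δ))) :=
          Finset.sum_le_sum hstepbd
      _ = (∫ s in (0:ℝ)..t, F s) + n * (h * (2*M*(2*M*h)/(δ*δ))) := by
          rw [Finset.sum_add_distrib,
            intervalIntegral.sum_integral_adjacent_intervals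
              (fun i _ => hFI (a i) (a (i+1)) (hann i) (hann (i+1))),
            ha0, han, Finset.sum_const, Finset.card_range, nsmul_eq_mul]
      _ = (∫ s in (0:ℝ)..t, F s) + (t*(2*M*(2*M*t))/(δ*δ))/n := by
          rw [hh]; field_simp
  have hlog2 : Real.log (δ + A t) - Real.log δ ≤ ∫ s in (0:ℝ)..t, F s := by
    have hlim : Tendsto
        (fun n : ℕ => (∫ s in (0:ℝ)..t, F s) + (t*(2*M*(2*M*t))/(δ*δ))/n)
        atTop (nhds ((∫ s in (0:ℝ)..t, F s) + 0)) :=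
      tendsto_const_nhds.add (tendsto_const_div_atTop_nhds_zero_nat _)
    have := ge_of_tendsto hlim (eventually_atTop.2 ⟨1, fun n hn => claim n hn⟩)
    simpa using this
  have hZt : Z t ≤ A t := hZ t ⟨le_refl 0 |>.trans ht, le_refl t⟩
  have hAt := hApos t ht
  have h4 : Real.log (1 + Z t/δ) ≤ Real.log (δ + A t) - Real.log δ := by
    rw [← Real.log_div hAt.ne' hδ.ne']
    refine Real.log_le_log (by have := hZ0 t; positivity) ?_
    rw [add_div, div_self hδ.ne']
    gcongr
  have heq : (∫ s in (0:ℝ)..t, F s) = ∫ s in Set.Ioc (0:ℝ) t, F s :=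
    intervalIntegral.integral_of_le ht
  have hintF : IntegrableOn F (Set.Ioc 0 t) :=
    bdd_integrableOn hFm measurableSet_Ioc measure_Ioc_lt_top (fun s hs => hFb s hs.1.le)
  have hintMin : IntegrableOn (fun s => min (2*M/δ) (g s / Z s)) (Set.Ioc 0 t) :=
    bdd_integrableOn (measurable_const.min (hg.div hZm)) measurableSet_Ioc
      measure_Ioc_lt_top
      (fun s _ => by
        have h1 : 0 ≤ min (2*M/δ) (g s / Z s) :=
          le_min (by positivity) (div_nonneg (hg0 s) (hZ0 s))
        rw [Real.norm_eq_abs, abs_of_nonneg h1]; exact min_le_left _ _)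
  have hmono2 : ∀ s ∈ Set.Ioc (0:ℝ) t, F s ≤ min (2*M/δ) (g s / Z s) := by
    intro s hs
    have hs0 : 0 ≤ s := hs.1.le
    have hAsnn := hAnn s hs0
    have hAsP := hApos s hs0
    refine le_min ?_ ?_
    · exact div_le_div₀ (by positivity) (hgM s) hδ (by linarith)
    · rcases eq_or_lt_of_le (hZ0 s) with h0 | h0
      · simp only [hF, hgZ s h0.symm, zero_div, le_refl]
      · have hZA : Z s ≤ A s := hZ s ⟨hs0, hs.2⟩
        have hg0s := hg0 s
        show g s / (δ + A s) ≤ g s / Z s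
        gcongr <;> linarith
  have h6 : (∫ s in Set.Ioc (0:ℝ) t, F s)
      ≤ ∫ s in Set.Ioc (0:ℝ) t, min (2*M/δ) (g s / Z s) :=
    setIntegral_mono_on hintF hintMin measurableSet_Ioc hmono2
  calc Real.log (1 + Z t / δ) ≤ Real.log (δ + A t) - Real.log δ := h4
    _ ≤ ∫ s in (0:ℝ)..t, F s := hlog2
    _ = ∫ s in Set.Ioc (0:ℝ) t, F s := heq
    _ ≤ _ := h6

theorem stmt14 (d : ℕ) (hd : 1 ≤ d) (T r δ M : ℝ) (hT : 0 ≤ T) (hr : 0 < r)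
    (hδ₀ : 0 < δ) (hδ₁ : δ < 1)
    (B : ℝ → EuclideanSpace ℝ (Fin d) → EuclideanSpace ℝ (Fin d))
    (hBbd : ∀ t x, ‖B t x‖ ≤ M)
    (hBm : Measurable (Function.uncurry B))
    (X₁ X₂ : ℝ → EuclideanSpace ℝ (Fin d) → EuclideanSpace ℝ (Fin d))
    (hm₁ : Measurable (Function.uncurry X₁)) (hm₂ : Measurable (Function.uncurry X₂))
    (hflow₁ : ∀ x ∈ Metric.ball (0 : EuclideanSpace ℝ (Fin d)) r, ∀ t ∈ Set.Icc 0 T,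
      X₁ t x = x + ∫ s in (0 : ℝ)..t, B s (X₁ s x))
    (hflow₂ : ∀ x ∈ Metric.ball (0 : EuclideanSpace ℝ (Fin d)) r, ∀ t ∈ Set.Icc 0 T,
      X₂ t x = x + ∫ s in (0 : ℝ)..t, B s (X₂ s x))
    (t : ℝ) (ht : t ∈ Set.Icc 0 T) :
    (∫⁻ x in Metric.ball (0 : EuclideanSpace ℝ (Fin d)) r,
        ENNReal.ofReal (Real.log (1 + ‖X₁ t x - X₂ t x‖ / δ)))
      ≤ ∫⁻ s in Set.Ioc (0 : ℝ) t,
          ∫⁻ x in Metric.ball (0 : EuclideanSpace ℝ (Fin d)) r,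
            ENNReal.ofReal (min (2 * M / δ)
              (‖B s (X₁ s x) - B s (X₂ s x)‖ / ‖X₁ s x - X₂ s x‖)) := by
  have hM : 0 ≤ M := le_trans (norm_nonneg _) (hBbd 0 0)
  have ht0 : 0 ≤ t := ht.1
  have htT : t ≤ T := ht.2
  -- measurability facts
  have hx1 : ∀ x : EuclideanSpace ℝ (Fin d), Measurable fun s => X₁ s x := by
    intro x
    exact hm₁.comp (measurable_id.prodMk measurable_const)
  have hx2 : ∀ x : EuclideanSpace ℝ (Fin d), Measurable fun s => X₂ s x := by
    intro x
    exact hm₂.comp (measurable_id.prodMk measurable_const)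
  have hBx1 : ∀ x : EuclideanSpace ℝ (Fin d), Measurable fun s => B s (X₁ s x) := by
    intro x
    exact hBm.comp (measurable_id.prodMk (hx1 x))
  have hBx2 : ∀ x : EuclideanSpace ℝ (Fin d), Measurable fun s => B s (X₂ s x) := by
    intro x
    exact hBm.comp (measurable_id.prodMk (hx2 x))
  -- the pointwise-in-x inequality
  have hptwise : ∀ x ∈ Metric.ball (0 : EuclideanSpace ℝ (Fin d)) r,
      Real.log (1 + ‖X₁ t x - X₂ t x‖ / δ) ≤
        ∫ s in Set.Ioc (0:ℝ) t, min (2 * M / δ)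
          (‖B s (X₁ s x) - B s (X₂ s x)‖ / ‖X₁ s x - X₂ s x‖) := by
    intro x hx
    refine key δ M t hδ₀ hM ht0
      (fun s => ‖B s (X₁ s x) - B s (X₂ s x)‖)
      (fun s => ‖X₁ s x - X₂ s x‖)
      ((hBx1 x).sub (hBx2 x)).norm
      (fun s => norm_nonneg _)
      (fun s => le_trans (norm_sub_le _ _) (by
        have := hBbd s (X₁ s x); have := hBbd s (X₂ s x); linarith))
      ((hx1 x).sub (hx2 x)).norm
      (fun s => norm_nonneg _)
      (fun s hs => by
        simp only [norm_eq_zero, sub_eq_zero] at hs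
        simp only [hs, sub_self, norm_zero])
      ?_
    intro s hs
    show ‖X₁ s x - X₂ s x‖ ≤ ∫ u in (0:ℝ)..s, ‖B u (X₁ u x) - B u (X₂ u x)‖
    have hsT : s ∈ Set.Icc (0:ℝ) T := ⟨hs.1, hs.2.trans htT⟩
    have hint1 : IntervalIntegrable (fun u => B u (X₁ u x)) volume 0 s :=
      bdd_intervalIntegrable (C := M) (hBx1 x) (fun u _ => hBbd u _)
    have hint2 : IntervalIntegrable (fun u => B u (X₂ u x)) volume 0 s :=
      bdd_intervalIntegrable (C := M) (hBx2 x) (fun u _ => hBbd u _)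
    have hdiff : X₁ s x - X₂ s x
        = ∫ u in (0:ℝ)..s, (B u (X₁ u x) - B u (X₂ u x)) := by
      rw [hflow₁ x hx s hsT, hflow₂ x hx s hsT,
        intervalIntegral.integral_sub hint1 hint2]
      abel
    rw [hdiff]
    exact intervalIntegral.norm_integral_le_integral_norm hs.1
  -- joint measurability of the RHS integrand
  have hH : Measurable fun p : ℝ × EuclideanSpace ℝ (Fin d) =>
      ENNReal.ofReal (min (2 * M / δ)
        (‖B p.1 (X₁ p.1 p.2) - B p.1 (X₂ p.1 p.2)‖ / ‖X₁ p.1 p.2 - X₂ p.1 p.2‖)) := by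
    have h1 : Measurable fun p : ℝ × EuclideanSpace ℝ (Fin d) => B p.1 (X₁ p.1 p.2) := by
      exact hBm.comp (measurable_fst.prodMk hm₁)
    have h2 : Measurable fun p : ℝ × EuclideanSpace ℝ (Fin d) => B p.1 (X₂ p.1 p.2) := by
      exact hBm.comp (measurable_fst.prodMk hm₂)
    exact (measurable_const.min ((h1.sub h2).norm.div ((hm₁.sub hm₂).norm))).ennreal_ofReal
  -- lift the pointwise bound to ENNReal
  have hlift : ∀ x ∈ Metric.ball (0 : EuclideanSpace ℝ (Fin d)) r,
      ENNReal.ofReal (Real.log (1 + ‖X₁ t x - X₂ t x‖ / δ)) ≤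
        ∫⁻ s in Set.Ioc (0:ℝ) t, ENNReal.ofReal (min (2 * M / δ)
          (‖B s (X₁ s x) - B s (X₂ s x)‖ / ‖X₁ s x - X₂ s x‖)) := by
    intro x hx
    have hint : IntegrableOn (fun s => min (2 * M / δ)
        (‖B s (X₁ s x) - B s (X₂ s x)‖ / ‖X₁ s x - X₂ s x‖)) (Set.Ioc (0:ℝ) t) := by
      refine bdd_integrableOn (C := 2*M/δ)
        (measurable_const.min ((((hBx1 x).sub (hBx2 x)).norm).div (((hx1 x).sub (hx2 x)).norm)))
        measurableSet_Ioc measure_Ioc_lt_top (fun s _ => ?_)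
      have h1 : 0 ≤ min (2*M/δ)
          (‖B s (X₁ s x) - B s (X₂ s x)‖ / ‖X₁ s x - X₂ s x‖) :=
        le_min (by positivity) (div_nonneg (norm_nonneg _) (norm_nonneg _))
      rw [Real.norm_eq_abs, abs_of_nonneg h1]
      exact min_le_left _ _
    calc ENNReal.ofReal (Real.log (1 + ‖X₁ t x - X₂ t x‖ / δ))
        ≤ ENNReal.ofReal (∫ s in Set.Ioc (0:ℝ) t, min (2 * M / δ)
            (‖B s (X₁ s x) - B s (X₂ s x)‖ / ‖X₁ s x - X₂ s x‖)) :=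
          ENNReal.ofReal_le_ofReal (hptwise x hx)
      _ = _ := by
          rw [ofReal_integral_eq_lintegral_ofReal hint
            (Filter.Eventually.of_forall (fun s =>
              le_min (by positivity) (div_nonneg (norm_nonneg _) (norm_nonneg _))))]
  -- conclude by monotonicity and Tonelli
  calc (∫⁻ x in Metric.ball (0 : EuclideanSpace ℝ (Fin d)) r,
        ENNReal.ofReal (Real.log (1 + ‖X₁ t x - X₂ t x‖ / δ)))
      ≤ ∫⁻ x in Metric.ball (0 : EuclideanSpace ℝ (Fin d)) r,
          ∫⁻ s in Set.Ioc (0:ℝ) t, ENNReal.ofReal (min (2 * M / δ)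
            (‖B s (X₁ s x) - B s (X₂ s x)‖ / ‖X₁ s x - X₂ s x‖)) := by
        refine setLIntegral_mono ?_ hlift
        exact Measurable.lintegral_prod_left hH
    _ = _ := by
        refine lintegral_lintegral_swap ?_
        exact ((hH.comp measurable_swap)).aemeasurable
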